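/- Let H be a complex Hilbert space and T a bounded operator on H. For unit vectors x, y ∈ H and any two points a = ⟨T x, x⟩, b = ⟨T y, y⟩ in W(T) with a ≠ b, and any t ∈ [0,1], there exists a unit vector z in the (complex) span of x and y with ⟨T z, z⟩ = (1-t)·a + t·b. -/

import Mathlib

open scoped InnerProductSpace

theorem toeplitz_hausdorff_two_dim
    {H : Type*} [NormedAddCommGroup H] [InnerProductSpace ℂ H] [CompleteSpace H]
    (T : H →L[ℂ] H) (x y : H) (hx : ‖x‖ = 1) (hy : ‖y‖ = 1)
    (hab : ⟪T x, x⟫_ℂ ≠ ⟪T y, y⟫_ℂ) (t : ℝ) (ht : t ∈ Set.Icc (0 : ℝ) 1) :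
    ∃ z ∈ Submodule.span ℂ ({x, y} : Set H), ‖z‖ = 1 ∧
      ⟪T z, z⟫_ℂ = ((1 - t : ℝ) : ℂ) * ⟪T x, x⟫_ℂ + (t : ℂ) * ⟪T y, y⟫_ℂ := by
  set a : ℂ := ⟪T x, x⟫_ℂ with ha
  set b : ℂ := ⟪T y, y⟫_ℂ with hb
  set d : ℂ := b - a with hd
  have hd0 : d ≠ 0 := sub_ne_zero.mpr (Ne.symm hab)
  set p : ℂ := d⁻¹ * (⟪T x, y⟫_ℂ - a * ⟪x, y⟫_ℂ) with hp
  set q : ℂ := d⁻¹ * (⟪T y, x⟫_ℂ - a * ⟪y, x⟫_ℂ) with hq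
  set w : ℂ := p - starRingEnd ℂ q with hw
  set c : ℂ := if w = 0 then 1 else (‖w‖ : ℂ)⁻¹ * w with hc
  have hcnorm : ‖c‖ = 1 := by
    rw [hc]; split_ifs with h
    · simp
    · rw [norm_mul, norm_inv, Complex.norm_real, norm_norm,
        inv_mul_cancel₀ (norm_ne_zero_iff.mpr h)]
  have hcc : starRingEnd ℂ c * c = 1 := by
    have h2 : c * starRingEnd ℂ c = 1 := by
      rw [Complex.mul_conj, Complex.normSq_eq_norm_sq, hcnorm]; norm_num
    rw [mul_comm]; exact h2
  have hcw : starRingEnd ℂ (starRingEnd ℂ c * w) = starRingEnd ℂ c * w := by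
    rw [hc]; split_ifs with h
    · simp [h]
    · have e : starRingEnd ℂ ((‖w‖ : ℂ)⁻¹ * w) * w = ((‖w‖ : ℂ))⁻¹ * (w * starRingEnd ℂ w) := by
        rw [map_mul, map_inv₀, Complex.conj_ofReal]; ring
      rw [e, Complex.mul_conj, map_mul, map_inv₀, Complex.conj_ofReal, Complex.conj_ofReal]
  set M : ℂ := starRingEnd ℂ c * p + c * q with hM
  have hMreal : starRingEnd ℂ M = M := by
    have h1 : starRingEnd ℂ M = c * starRingEnd ℂ p + starRingEnd ℂ c * starRingEnd ℂ q := by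
      rw [hM, map_add, map_mul, map_mul]; simp
    have h2 : starRingEnd ℂ (starRingEnd ℂ c * w) = c * (starRingEnd ℂ p - q) := by
      rw [map_mul, hw, map_sub]; simp
    have h3 : starRingEnd ℂ c * w = starRingEnd ℂ c * p - starRingEnd ℂ c * starRingEnd ℂ q := by
      rw [hw]; ring
    have hthis := hcw
    rw [h2, h3] at hthis
    rw [h1]; linear_combination hthis
  set Mr : ℝ := M.re with hMr
  have hMC : (Mr : ℂ) = M := by
    rw [hMr, Complex.conj_eq_iff_re.mp hMreal]
  set z : ℝ → H := fun s => (((1 - s : ℝ) : ℂ) * c) • x + ((s : ℝ) : ℂ) • y with hz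
  set g : ℝ → ℝ := fun s => s ^ 2 + s * (1 - s) * Mr with hg
  have hxx : ⟪x, x⟫_ℂ = 1 := by rw [inner_self_eq_norm_sq_to_K, hx]; norm_num
  have hyy : ⟪y, y⟫_ℂ = 1 := by rw [inner_self_eq_norm_sq_to_K, hy]; norm_num
  have hdM : d * M = starRingEnd ℂ c * (⟪T x, y⟫_ℂ - a * ⟪x, y⟫_ℂ)
      + c * (⟪T y, x⟫_ℂ - a * ⟪y, x⟫_ℂ) := by
    rw [hM, hp, hq]; field_simp
  -- key identity
  have key : ∀ s : ℝ, ⟪T (z s), z s⟫_ℂ = a * ⟪z s, z s⟫_ℂ + d * (g s : ℂ) := by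
    intro s
    simp only [hz, hg, map_add, map_smul, map_mul, inner_add_left, inner_add_right,
      inner_smul_left, inner_smul_right, Complex.conj_ofReal,
      ContinuousLinearMap.map_add, ContinuousLinearMap.map_smul]
    rw [hxx, hyy]
    push_cast
    rw [hMC]
    linear_combination (-((1 - (s:ℂ))^2 * c * starRingEnd ℂ c)) * ha
      + (-((s:ℂ) * (1 - (s:ℂ)))) * hdM + (-((s:ℂ)^2)) * hd + (-((s:ℂ)^2)) * hb
  -- nonvanishing of the path on [0,1]
  have hzne : ∀ s ∈ Set.Icc (0:ℝ) 1, z s ≠ 0 := by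
    intro s hs hzs
    rcases eq_or_ne s 0 with h0 | h0
    · rw [hz] at hzs
      simp only [h0, Complex.ofReal_zero, zero_smul, add_zero, sub_zero, Complex.ofReal_one,
        one_mul] at hzs
      have hc0 : c ≠ 0 := by intro h; rw [h] at hcnorm; simp at hcnorm
      have : x = 0 := (smul_eq_zero.mp hzs).resolve_left hc0
      rw [this] at hx; simp at hx
    · have hs0 : ((s : ℝ) : ℂ) ≠ 0 := Complex.ofReal_ne_zero.mpr h0
      set μ : ℂ := ((s:ℂ))⁻¹ * (-(((1 - s : ℝ) : ℂ) * c)) with hμ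
      have hyx : y = μ • x := by
        have h' : ((s : ℝ) : ℂ) • y = (-((((1 - s : ℝ) : ℂ) * c))) • x := by
          rw [neg_smul]
          rw [hz] at hzs
          simp only at hzs
          rw [add_comm] at hzs
          exact eq_neg_of_add_eq_zero_left hzs
        calc y = (((s:ℂ))⁻¹ * (s:ℂ)) • y := by rw [inv_mul_cancel₀ hs0, one_smul]
        _ = ((s:ℂ))⁻¹ • (((s : ℝ) : ℂ) • y) := by rw [mul_smul]
        _ = ((s:ℂ))⁻¹ • ((-((((1 - s : ℝ) : ℂ) * c))) • x) := by rw [h']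
        _ = μ • x := by rw [hμ, mul_smul]
      have hμ1 : ‖μ‖ = 1 := by
        have := congrArg norm hyx
        rw [norm_smul, hx, hy, mul_one] at this
        exact this.symm
      have hba : b = a := by
        rw [hb, hyx]
        simp only [ContinuousLinearMap.map_smul, inner_smul_left, inner_smul_right]
        rw [← mul_assoc, Complex.mul_conj,
          Complex.normSq_eq_norm_sq, hμ1]
        simp [ha]
      exact hab hba.symm
  have h1cont : Continuous fun s : ℝ => (((1 - s : ℝ) : ℂ) * c) :=
    (Complex.continuous_ofReal.comp (continuous_const.sub continuous_id)).mul continuous_const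
  have hzcont : Continuous z := by
    rw [hz]
    exact (h1cont.smul continuous_const).add (Complex.continuous_ofReal.smul continuous_const)
  set n : ℝ → ℝ := fun s => ‖z s‖ ^ 2 with hn
  have hncont : Continuous n := hzcont.norm.pow 2
  have hnpos : ∀ s ∈ Set.Icc (0:ℝ) 1, 0 < n s := fun s hs =>
    pow_pos (norm_pos_iff.mpr (hzne s hs)) 2
  set f : ℝ → ℝ := fun s => g s / n s with hf
  have hfcont : ContinuousOn f (Set.Icc 0 1) := by
    apply ContinuousOn.div (by fun_prop) hncont.continuousOn
    intro s hs; exact (hnpos s hs).ne'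
  have hn1 : n 1 = 1 := by
    simp only [hn, hz, sub_self, Complex.ofReal_zero, Complex.ofReal_one, zero_mul, zero_smul,
      one_smul, zero_add, hy, one_pow]
  have hf0 : f 0 = 0 := by simp [hf, hg]
  have hf1 : f 1 = 1 := by simp [hf, hg, hn1]
  have htm : t ∈ Set.Icc (f 0) (f 1) := by rw [hf0, hf1]; exact ht
  obtain ⟨s₀, hs₀, hfs₀⟩ := intermediate_value_Icc (by norm_num : (0:ℝ) ≤ 1) hfcont htm
  have hz0 : ‖z s₀‖ ≠ 0 := norm_ne_zero_iff.mpr (hzne s₀ hs₀)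
  refine ⟨((‖z s₀‖⁻¹ : ℝ) : ℂ) • z s₀, ?_, ?_, ?_⟩
  · apply Submodule.smul_mem
    apply Submodule.add_mem
    · exact Submodule.smul_mem _ _ (Submodule.subset_span (by simp))
    · exact Submodule.smul_mem _ _ (Submodule.subset_span (by simp))
  · rw [norm_smul, Complex.norm_real, Real.norm_eq_abs,
      abs_of_nonneg (inv_nonneg.mpr (norm_nonneg _)), inv_mul_cancel₀ hz0]
  · have hzn : ⟪z s₀, z s₀⟫_ℂ = ((n s₀ : ℝ) : ℂ) := by
      rw [inner_self_eq_norm_sq_to_K]; simp only [hn]; norm_cast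
    have hgt : g s₀ = t * n s₀ := by
      rw [← hfs₀]; simp only [hf]; field_simp; exact (mul_div_cancel_right₀ _ (hnpos s₀ hs₀).ne').symm
    have hgtC : ((g s₀ : ℝ) : ℂ) = (t : ℂ) * ((n s₀ : ℝ) : ℂ) := by
      rw [hgt]; push_cast; ring
    have hninv : ((‖z s₀‖⁻¹ : ℝ) : ℂ) * ((‖z s₀‖⁻¹ : ℝ) : ℂ) * ((n s₀ : ℝ) : ℂ) = 1 := by
      simp only [hn]; norm_cast; field_simp
    have h1t : ((1 - t : ℝ) : ℂ) = 1 - (t : ℂ) := by push_cast; ring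
    rw [map_smul, inner_smul_left, inner_smul_right, key s₀, hzn, hgtC, Complex.conj_ofReal, h1t]
    linear_combination (a + d * (t : ℂ)) * hninv + (t : ℂ) * hd
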